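/- Let μ, λ, κ be cardinals with ω ≤ μ < λ ≤ κ. Then A(μ)^κ ∈ Δ(λ): the set S of finite-support points of A(μ)^κ is dense and satisfies (i) w(cl(T)) < λ for every T ⊆ S with |T| < λ, and (ii) |f[S]| = λ for every continuous surjection f from A(μ)^κ onto a Hausdorff space Y with w(Y) = λ. -/

import Mathlib

open Cardinal Set Function

universe u

noncomputable section

/-- The density of a topological space: least cardinality of a dense subset. -/
def tdensity (X : Type u) [TopologicalSpace X] : Cardinal.{u} :=
  sInf {c : Cardinal.{u} | ∃ s : Set X, Dense s ∧ #s = c}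

/-- The weight of a topological space: least cardinality of a base. -/
def tweight (X : Type u) [TopologicalSpace X] : Cardinal.{u} :=
  sInf {c : Cardinal.{u} | ∃ B : Set (Set X), TopologicalSpace.IsTopologicalBasis B ∧ #B = c}

/-- The π-weight: least cardinality of a π-base. -/
def piWeight (X : Type u) [TopologicalSpace X] : Cardinal.{u} :=
  sInf {c : Cardinal.{u} | ∃ B : Set (Set X),
    (∀ U ∈ B, IsOpen U ∧ U.Nonempty) ∧
    (∀ V : Set X, IsOpen V → V.Nonempty → ∃ U ∈ B, U ⊆ V) ∧ #B = c}

/-- ĉ(X): the least cardinal κ such that X has no pairwise disjoint family of κ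
nonempty open sets. -/
def hatCell (X : Type u) [TopologicalSpace X] : Cardinal.{u} :=
  sInf {c : Cardinal.{u} | ¬ ∃ 𝒰 : Set (Set X),
    (∀ U ∈ 𝒰, IsOpen U ∧ U.Nonempty) ∧ 𝒰.PairwiseDisjoint id ∧ #𝒰 = c}

/-- `H` is a closed G_λ set: closed and the intersection of at most λ open sets. -/
def IsClosedGLambda (lam : Cardinal.{u}) {X : Type u} [TopologicalSpace X] (H : Set X) : Prop :=
  IsClosed H ∧ ∃ 𝒰 : Set (Set X), (∀ U ∈ 𝒰, IsOpen U) ∧ #𝒰 ≤ lam ∧ H = ⋂₀ 𝒰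

/-- X ∈ Γ(λ): every closed G_λ set has density ≤ λ. -/
def InGamma (lam : Cardinal.{u}) (X : Type u) [TopologicalSpace X] : Prop :=
  ∀ H : Set X, IsClosedGLambda lam H → tdensity ↥H ≤ lam

/-- `S` witnesses `X ∈ Δ(λ)`. -/
def DeltaWitness (lam : Cardinal.{u}) (X : Type u) [TopologicalSpace X] (S : Set X) : Prop :=
  Dense S ∧
  (∀ T : Set X, T ⊆ S → #T < lam → tweight ↥(closure T) < lam) ∧
  (∀ (Y : Type u) (_ : TopologicalSpace Y), T2Space Y → ∀ f : X → Y,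
     Continuous f → Surjective f → tweight Y = lam → #(f '' S) = lam)

/-- X ∈ Δ(λ). -/
def InDelta (lam : Cardinal.{u}) (X : Type u) [TopologicalSpace X] : Prop :=
  lam ≤ tweight X ∧ ∃ S : Set X, DeltaWitness lam X S

/-- A canonical discrete space of cardinality `c`. -/
instance (c : Cardinal.{u}) : TopologicalSpace c.out := ⊥

instance (c : Cardinal.{u}) : DiscreteTopology c.out := ⟨rfl⟩

/-- A(μ): one-point compactification of a discrete space of cardinality μ. -/
def ACompact (μ : Cardinal.{u}) : Type u := OnePoint μ.out

instance (μ : Cardinal.{u}) : TopologicalSpace (ACompact μ) :=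
  inferInstanceAs (TopologicalSpace (OnePoint μ.out))

/-- A(μ)^κ. -/
def APow (μ κ : Cardinal.{u}) : Type u := κ.out → ACompact μ

instance (μ κ : Cardinal.{u}) : TopologicalSpace (APow μ κ) :=
  inferInstanceAs (TopologicalSpace (κ.out → ACompact μ))

/-- The set of finite-support points of A(μ)^κ. -/
def finSupport (μ κ : Cardinal.{u}) : Set (APow μ κ) :=
  {x | {ξ | x ξ ≠ (OnePoint.infty : OnePoint μ.out)}.Finite}

/-- X is polyadic: a continuous image of some A(μ)^κ. -/
def IsPolyadic (X : Type u) [TopologicalSpace X] : Prop :=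
  ∃ μ κ : Cardinal.{u}, ℵ₀ ≤ μ ∧ ∃ f : APow μ κ → X, Continuous f ∧ Surjective f

/-! ### Auxiliary lemmas -/

open TopologicalSpace OnePoint

section WeightLemmas

lemma tweight_le_basis {X : Type u} [TopologicalSpace X]
    {B : Set (Set X)} (hB : IsTopologicalBasis B) : tweight X ≤ #B :=
  csInf_le (OrderBot.bddBelow _) ⟨B, hB, rfl⟩

lemma exists_basis_tweight (X : Type u) [TopologicalSpace X] :
    ∃ B : Set (Set X), IsTopologicalBasis B ∧ #B = tweight X :=
  csInf_mem (s := {c : Cardinal.{u} | ∃ B : Set (Set X), IsTopologicalBasis B ∧ #B = c})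
    ⟨_, {U : Set X | IsOpen U}, isTopologicalBasis_opens, rfl⟩

lemma le_tweight_of {X : Type u} [TopologicalSpace X] {c : Cardinal.{u}}
    (h : ∀ B : Set (Set X), IsTopologicalBasis B → c ≤ #B) : c ≤ tweight X :=
  le_csInf ⟨_, {U : Set X | IsOpen U}, isTopologicalBasis_opens, rfl⟩
    (by rintro d ⟨B, hB, rfl⟩; exact h B hB)

lemma mk_finset_le' (α : Type u) : #(Finset α) ≤ max ℵ₀ #α := by
  cases finite_or_infinite α with
  | inl h => haveI := Fintype.ofFinite α
             exact le_max_of_le_left (lt_aleph0_of_finite (Finset α)).le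
  | inr h => exact (mk_finset_of_infinite α).le.trans (le_max_right _ _)

/-- Weight of a continuous image of a compact space. -/
lemma tweight_image_le {K Y : Type u} [TopologicalSpace K] [TopologicalSpace Y]
    [CompactSpace K] [T2Space Y] {f : K → Y} (hf : Continuous f) (hsurj : Surjective f) :
    tweight Y ≤ max ℵ₀ (tweight K) := by
  classical
  obtain ⟨B, hB, hBcard⟩ := exists_basis_tweight K
  set g : Finset ↥B → Set Y := fun F => (f '' (⋃ u ∈ F, (u : Set K))ᶜ)ᶜ with hg
  have hopen : ∀ F : Finset ↥B, IsOpen (g F) := by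
    intro F
    have hU : IsOpen (⋃ u ∈ F, (u : Set K)) :=
      isOpen_biUnion fun u _ => hB.isOpen u.2
    have : IsCompact (f '' (⋃ u ∈ F, (u : Set K))ᶜ) :=
      (hU.isClosed_compl.isCompact).image hf
    exact this.isClosed.isOpen_compl
  have hbasis : IsTopologicalBasis (range g) := by
    apply isTopologicalBasis_of_isOpen_of_nhds
    · rintro u ⟨F, rfl⟩; exact hopen F
    · intro y V hy hV
      have hKc : IsCompact (f ⁻¹' {y}) :=
        (IsClosed.preimage hf isClosed_singleton).isCompact
      have hcov : f ⁻¹' {y} ⊆ ⋃ u : ↥B, (if (u : Set K) ⊆ f ⁻¹' V then (u : Set K) else ∅) := by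
        intro k hk
        have hkV : k ∈ f ⁻¹' V := by
          simp only [mem_preimage, mem_singleton_iff] at hk; simp [mem_preimage, hk, hy]
        obtain ⟨u, huB, hku, huV⟩ :=
          hB.exists_subset_of_mem_open hkV (hV.preimage hf)
        exact mem_iUnion.2 ⟨⟨u, huB⟩, by simp [huV, hku]⟩
      obtain ⟨t, ht⟩ := hKc.elim_finite_subcover
        (fun u : ↥B => (if (u : Set K) ⊆ f ⁻¹' V then (u : Set K) else ∅))
        (fun u => by split <;> simp [hB.isOpen u.2]) hcov
      set F : Finset ↥B := t.filter (fun u => (u : Set K) ⊆ f ⁻¹' V) with hF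
      have hsub : (⋃ u ∈ F, (u : Set K)) ⊆ f ⁻¹' V := by
        intro k hk
        obtain ⟨u, hu, hku⟩ := mem_iUnion₂.1 hk
        exact (Finset.mem_filter.1 hu).2 hku
      have hfib : f ⁻¹' {y} ⊆ ⋃ u ∈ F, (u : Set K) := by
        intro k hk
        obtain ⟨u, hu, hku⟩ := mem_iUnion₂.1 (ht hk)
        by_cases hc : (u : Set K) ⊆ f ⁻¹' V
        · exact mem_iUnion₂.2 ⟨u, Finset.mem_filter.2 ⟨hu, hc⟩, by simpa [hc] using hku⟩
        · simp [hc] at hku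
      refine ⟨g F, ⟨F, rfl⟩, ?_, ?_⟩
      · rintro ⟨k, hk, hky⟩
        exact hk (hfib (show k ∈ f ⁻¹' {y} by simp [hky]))
      · intro y' hy'
        obtain ⟨k, rfl⟩ := hsurj y'
        by_cases hkF : k ∈ ⋃ u ∈ F, (u : Set K)
        · exact hsub hkF
        · exact absurd ⟨k, hkF, rfl⟩ hy'
  calc tweight Y ≤ #(range g) := tweight_le_basis hbasis
    _ ≤ #(Finset ↥B) := mk_range_le
    _ ≤ max ℵ₀ #↥B := mk_finset_le' _
    _ = max ℵ₀ (tweight K) := by rw [hBcard]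

lemma onePoint_cases {D : Type u} (b : OnePoint D) :
    b = (∞ : OnePoint D) ∨ ∃ a : D, b = (a : OnePoint D) :=
  Option.eq_none_or_eq_some b

lemma tweight_subset_pi_onePoint {ι D : Type u} [TopologicalSpace D] [DiscreteTopology D]
    (J : Set ι) (Z : Set (ι → OnePoint D))
    (hZ : ∀ z ∈ Z, ∀ ξ, ξ ∉ J → z ξ = (∞ : OnePoint D)) :
    tweight ↥Z ≤ #(Finset (↥J × (D ⊕ Finset D))) := by
  classical
  set V : D ⊕ Finset D → Set (OnePoint D) := fun e =>
    Sum.rec (fun a => {((a : OnePoint D))}) (fun s => (((↑) : D → OnePoint D) '' ↑s)ᶜ) e with hV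
  have hVopen : ∀ e, IsOpen (V e) := by
    rintro (a | s)
    · have : ({((a : OnePoint D))} : Set (OnePoint D)) = ((↑) : D → OnePoint D) '' {a} := by
        simp
      rw [hV]; dsimp only; rw [this]
      exact isOpen_image_coe.mpr (isOpen_discrete _)
    · exact isOpen_compl_image_coe.mpr ⟨isClosed_discrete _, (Finset.finite_toSet s).isCompact⟩
  set g : Finset (↥J × (D ⊕ Finset D)) → Set ↥Z := fun F =>
    Subtype.val ⁻¹' (⋂ p ∈ F, (fun x : ι → OnePoint D => x ↑p.1) ⁻¹' V p.2) with hg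
  have hbasis : IsTopologicalBasis (range g) := by
    apply isTopologicalBasis_of_isOpen_of_nhds
    · rintro _ ⟨F, rfl⟩
      exact (isOpen_biInter_finset fun p _ =>
        (continuous_apply (↑p.1 : ι)).isOpen_preimage _ (hVopen p.2)).preimage
        continuous_subtype_val
    · intro z O hzO hO
      obtain ⟨W, hW, rfl⟩ := isOpen_induced_iff.mp hO
      obtain ⟨I, u, hu, hpi⟩ := isOpen_pi_iff.mp hW _ hzO
      set c : ι → D ⊕ Finset D := fun i =>
        if h : ∃ a : D, z.1 i = (a : OnePoint D) then Sum.inl h.choose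
        else Sum.inr (if hfin : ((((↑) : D → OnePoint D) ⁻¹' u i)ᶜ).Finite
          then hfin.toFinset else ∅) with hc
      set F : Finset (↥J × (D ⊕ Finset D)) :=
        (I.filter (· ∈ J)).attach.image
          (fun i => ((⟨i.1, (Finset.mem_filter.mp i.2).2⟩ : ↥J), c i.1)) with hF
      refine ⟨g F, ⟨F, rfl⟩, ?_, ?_⟩
      · simp only [hg, mem_preimage, mem_iInter]
        rintro p hp
        obtain ⟨i, _, rfl⟩ := Finset.mem_image.mp hp
        by_cases h : ∃ a : D, z.1 (↑i : ι) = (a : OnePoint D)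
        · simp only [hc, dif_pos h, hV, mem_singleton_iff]
          exact h.choose_spec
        · simp only [hc, dif_neg h, hV]
          have hz : z.1 (↑i : ι) = (∞ : OnePoint D) :=
            (onePoint_cases _).resolve_right h
          rw [hz]
          exact infty_notMem_image_coe
      · intro w hw
        simp only [hg, mem_preimage, mem_iInter] at hw
        refine mem_preimage.mpr (hpi ?_)
        intro i hiI
        by_cases hiJ : i ∈ J
        · have hmem : ((⟨i, hiJ⟩ : ↥J), c i) ∈ F := by
            exact Finset.mem_image.mpr ⟨(⟨i, Finset.mem_filter.mpr ⟨hiI, hiJ⟩⟩ :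
              {x // x ∈ I.filter (· ∈ J)}), Finset.mem_attach _ _, rfl⟩
          have hwV := hw _ hmem
          by_cases h : ∃ a : D, z.1 i = (a : OnePoint D)
          · simp only [hc, dif_pos h, hV, mem_singleton_iff] at hwV
            have : z.1 i ∈ u i := (hu i hiI).2
            rwa [hwV, ← h.choose_spec]
          · have hz : z.1 i = (∞ : OnePoint D) := (onePoint_cases _).resolve_right h
            have hinf : (∞ : OnePoint D) ∈ u i := hz ▸ (hu i hiI).2
            have hcpt : IsCompact ((((↑) : D → OnePoint D) ⁻¹' u i)ᶜ) :=
              ((isOpen_iff_of_mem' hinf).mp (hu i hiI).1).1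
            have hfin : ((((↑) : D → OnePoint D) ⁻¹' u i)ᶜ).Finite :=
              hcpt.finite_of_discrete
            simp only [hc, dif_neg h, dif_pos hfin, hV, mem_compl_iff] at hwV
            rcases onePoint_cases (w.1 i) with hwi | ⟨b, hwi⟩
            · rw [hwi]; exact hz ▸ hinf
            · rw [hwi] at hwV ⊢
              by_contra hnot
              exact hwV ⟨b, by simp only [Finset.mem_coe, Set.Finite.mem_toFinset,
                mem_compl_iff, mem_preimage]; exact hnot, rfl⟩
        · have : w.1 i = (∞ : OnePoint D) := hZ _ w.2 i hiJ
          rw [this, ← hZ _ z.2 i hiJ]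
          exact (hu i hiI).2
  calc tweight ↥Z ≤ #(range g) := tweight_le_basis hbasis
    _ ≤ #(Finset (↥J × (D ⊕ Finset D))) := mk_range_le

/-- Any continuous real-valued function on a product of one-point compactifications of
discrete spaces depends on countably many coordinates. -/
lemma depends_countable {ι D : Type u} [TopologicalSpace D] [DiscreteTopology D]
    (g : C(ι → OnePoint D, ℝ)) :
    ∃ J : Set ι, J.Countable ∧
      ∀ x y : ι → OnePoint D, (∀ ξ ∈ J, x ξ = y ξ) → g x = g y := by
  classical
  set X := ι → OnePoint D
  set A : Subalgebra ℝ C(X, ℝ) :=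
    { carrier := {h : C(X, ℝ) | ∃ I : Finset ι, ∀ x y : X, (∀ ξ ∈ I, x ξ = y ξ) → h x = h y}
      mul_mem' := by
        rintro h₁ h₂ ⟨I₁, hI₁⟩ ⟨I₂, hI₂⟩
        exact ⟨I₁ ∪ I₂, fun x y hxy => by
          simp only [ContinuousMap.mul_apply]
          rw [hI₁ x y (fun ξ hξ => hxy ξ (Finset.mem_union_left _ hξ)),
            hI₂ x y (fun ξ hξ => hxy ξ (Finset.mem_union_right _ hξ))]⟩
      one_mem' := ⟨∅, fun x y _ => rfl⟩
      add_mem' := by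
        rintro h₁ h₂ ⟨I₁, hI₁⟩ ⟨I₂, hI₂⟩
        exact ⟨I₁ ∪ I₂, fun x y hxy => by
          simp only [ContinuousMap.add_apply]
          rw [hI₁ x y (fun ξ hξ => hxy ξ (Finset.mem_union_left _ hξ)),
            hI₂ x y (fun ξ hξ => hxy ξ (Finset.mem_union_right _ hξ))]⟩
      zero_mem' := ⟨∅, fun x y _ => rfl⟩
      algebraMap_mem' := fun r => ⟨∅, fun x y _ => rfl⟩ } with hA
  have hsep : A.SeparatesPoints := by
    intro x y hxy
    have : ∃ ξ, x ξ ≠ y ξ := by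
      by_contra h
      push_neg at h
      exact hxy (funext h)
    obtain ⟨ξ, hξ⟩ := this
    obtain ⟨φ, hφ0, hφ1, -⟩ := exists_continuous_zero_one_of_isClosed
      (isClosed_singleton (x := x ξ)) (isClosed_singleton (x := y ξ))
      (by simpa [Set.disjoint_singleton] using hξ)
    refine ⟨(φ.comp ⟨fun z : X => z ξ, continuous_apply ξ⟩ : C(X, ℝ)),
      ⟨_, ⟨{ξ}, fun a b hab => by
        simp only [ContinuousMap.comp_apply, ContinuousMap.coe_mk]
        rw [hab ξ (Finset.mem_singleton_self ξ)]⟩, rfl⟩, ?_⟩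
    simp only [ContinuousMap.comp_apply, ContinuousMap.coe_mk]
    rw [hφ0 rfl, hφ1 rfl]
    norm_num
  have htop := ContinuousMap.subalgebra_topologicalClosure_eq_top_of_separatesPoints A hsep
  have hgmem : g ∈ closure (A : Set C(X, ℝ)) := by
    rw [← Subalgebra.topologicalClosure_coe, htop]
    exact Set.mem_univ _
  obtain ⟨h, hhA, htend⟩ := mem_closure_iff_seq_limit.mp hgmem
  choose I hI using fun n => (hhA n : ∃ I : Finset ι, _)
  refine ⟨⋃ n, ↑(I n), countable_iUnion fun n => (I n).countable_toSet, ?_⟩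
  intro x y hxy
  have hxy' : ∀ n, h n x = h n y := fun n =>
    hI n x y fun ξ hξ => hxy ξ (mem_iUnion.mpr ⟨n, hξ⟩)
  have hx : Filter.Tendsto (fun n => h n x) Filter.atTop (nhds (g x)) :=
    ((continuous_eval_const x).tendsto g).comp htend
  have hy : Filter.Tendsto (fun n => h n y) Filter.atTop (nhds (g y)) :=
    ((continuous_eval_const y).tendsto g).comp htend
  exact tendsto_nhds_unique (by simpa only [hxy'] using hx) hy

lemma exists_separating_family (Y : Type u) [TopologicalSpace Y] [CompactSpace Y] [T2Space Y] :
    ∃ G : Set C(Y, ℝ), #G ≤ max ℵ₀ (tweight Y) ∧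
      ∀ y₁ y₂ : Y, y₁ ≠ y₂ → ∃ g ∈ G, g y₁ ≠ g y₂ := by
  classical
  obtain ⟨B, hB, hBcard⟩ := exists_basis_tweight Y
  set ι := {p : ↥B × ↥B // Disjoint (closure (p.1 : Set Y)) (closure (p.2 : Set Y))} with hι
  have hury : ∀ p : ι, ∃ φ : C(Y, ℝ),
      EqOn φ 0 (closure ((p.1.1 : Set Y))) ∧ EqOn φ 1 (closure ((p.1.2 : Set Y))) := by
    intro p
    obtain ⟨φ, h0, h1, -⟩ := exists_continuous_zero_one_of_isClosed
      isClosed_closure isClosed_closure p.2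
    exact ⟨φ, h0, h1⟩
  choose φ hφ0 hφ1 using hury
  refine ⟨range φ, ?_, ?_⟩
  · refine mk_range_le.trans ?_
    have h1 : #ι ≤ #(↥B × ↥B) := mk_subtype_le _
    have h2 : #(↥B × ↥B) = tweight Y * tweight Y := by
      rw [mk_prod]; simp only [lift_id]; rw [hBcard]
    refine h1.trans (h2.le.trans ?_)
    refine (mul_le_max _ _).trans ?_
    simp [max_comm, le_refl, max_le_iff, le_max_iff, le_refl]
  · intro y₁ y₂ hne
    obtain ⟨O₁, O₂, hO₁, hO₂, hy₁, hy₂, hdisj⟩ := t2_separation hne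
    obtain ⟨C₁, hC₁n, hC₁c, hC₁s⟩ := exists_mem_nhds_isClosed_subset (hO₁.mem_nhds hy₁)
    obtain ⟨C₂, hC₂n, hC₂c, hC₂s⟩ := exists_mem_nhds_isClosed_subset (hO₂.mem_nhds hy₂)
    obtain ⟨U₁, hU₁B, hyU₁, hU₁s⟩ := hB.exists_subset_of_mem_open
      (mem_interior_iff_mem_nhds.mpr hC₁n) isOpen_interior
    obtain ⟨U₂, hU₂B, hyU₂, hU₂s⟩ := hB.exists_subset_of_mem_open
      (mem_interior_iff_mem_nhds.mpr hC₂n) isOpen_interior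
    have hcl₁ : closure U₁ ⊆ C₁ :=
      closure_minimal (hU₁s.trans interior_subset) hC₁c
    have hcl₂ : closure U₂ ⊆ C₂ :=
      closure_minimal (hU₂s.trans interior_subset) hC₂c
    have hdis : Disjoint (closure U₁) (closure U₂) :=
      hdisj.mono (hcl₁.trans hC₁s) (hcl₂.trans hC₂s)
    set p : ι := ⟨(⟨U₁, hU₁B⟩, ⟨U₂, hU₂B⟩), hdis⟩
    refine ⟨φ p, mem_range_self _, ?_⟩
    rw [hφ0 p (subset_closure hyU₁), hφ1 p (subset_closure hyU₂)]
    norm_num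

end WeightLemmas

section APowInstances

instance (μ : Cardinal.{u}) : CompactSpace (ACompact μ) :=
  inferInstanceAs (CompactSpace (OnePoint μ.out))

instance (μ : Cardinal.{u}) : T2Space (ACompact μ) :=
  inferInstanceAs (T2Space (OnePoint μ.out))

instance (μ κ : Cardinal.{u}) : CompactSpace (APow μ κ) :=
  inferInstanceAs (CompactSpace (κ.out → ACompact μ))

instance (μ κ : Cardinal.{u}) : T2Space (APow μ κ) :=
  inferInstanceAs (T2Space (κ.out → ACompact μ))

end APowInstances

section MainParts

lemma aux_dense (μ κ : Cardinal.{u}) : Dense (finSupport μ κ) := by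
  classical
  rw [dense_iff_inter_open]
  rintro U hU ⟨x, hx⟩
  obtain ⟨I, u, hu, hpi⟩ := isOpen_pi_iff.mp hU x hx
  refine ⟨fun i => if i ∈ I then x i else (∞ : OnePoint μ.out), ⟨?_, ?_⟩⟩
  · apply hpi
    intro i hi
    simp only [Finset.mem_coe] at hi
    simpa [hi] using (hu i hi).2
  · apply Set.Finite.subset I.finite_toSet
    intro ξ hξ
    by_contra hmem
    simp only [Finset.mem_coe] at hmem
    simp [finSupport, hmem] at hξ
    exact hξ rfl

lemma aux_lb (μ lam κ : Cardinal.{u}) (hμ : ℵ₀ ≤ μ) (h1 : μ < lam) (h2 : lam ≤ κ) :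
    lam ≤ tweight (APow μ κ) := by
  classical
  apply le_tweight_of
  intro B hB
  haveI : Infinite μ.out := Cardinal.infinite_iff.mpr (by rwa [mk_out])
  set a₀ : μ.out := Classical.arbitrary _
  have hsing : IsOpen ({((a₀ : OnePoint μ.out))} : Set (OnePoint μ.out)) := by
    rw [← image_singleton]
    exact isOpen_image_coe.mpr (isOpen_discrete _)
  set e : κ.out → APow μ κ :=
    fun ξ η => if η = ξ then ((a₀ : OnePoint μ.out)) else (∞ : OnePoint μ.out) with he
  set U : κ.out → Set (APow μ κ) :=
    fun ξ => (fun x : APow μ κ => x ξ) ⁻¹' {((a₀ : OnePoint μ.out))} with hUdef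
  have h : ∀ ξ, ∃ b ∈ B, e ξ ∈ b ∧ b ⊆ U ξ := fun ξ =>
    hB.exists_subset_of_mem_open (by show (if ξ = ξ then ((a₀ : OnePoint μ.out)) else (∞ : OnePoint μ.out)) = ((a₀ : OnePoint μ.out)); exact if_pos rfl)
      (IsOpen.preimage (continuous_apply ξ) hsing)
  choose b hbB hbmem hbsub using h
  have hinj : Injective (fun ξ => (⟨b ξ, hbB ξ⟩ : ↥B)) := by
    intro ξ η hbe
    by_contra hne
    have h2 : b η = b ξ := congrArg Subtype.val hbe.symm
    have h3 : e η ∈ U ξ := hbsub ξ (h2 ▸ hbmem η)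
    simp only [hUdef, mem_preimage, he, mem_singleton_iff, if_neg hne] at h3
    exact infty_ne_coe a₀ (by have h4 : (if ξ = η then ((a₀ : OnePoint μ.out)) else (∞ : OnePoint μ.out)) = ((a₀ : OnePoint μ.out)) := h3; rwa [if_neg hne] at h4)
  calc lam ≤ κ := h2
    _ = #κ.out := (mk_out κ).symm
    _ ≤ #↥B := mk_le_of_injective hinj

lemma aux_part_i (μ lam κ : Cardinal.{u}) (hμ : ℵ₀ ≤ μ) (h1 : μ < lam)
    (T : Set (APow μ κ)) (hTS : T ⊆ finSupport μ κ) (hT : #T < lam) :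
    tweight ↥(closure T) < lam := by
  classical
  have hlam0 : ℵ₀ < lam := lt_of_le_of_lt hμ h1
  set J : Set κ.out := ⋃ x ∈ T, {ξ | x ξ ≠ (∞ : OnePoint μ.out)} with hJ
  have hJlt : #↥J < lam := by
    rcases T.eq_empty_or_nonempty with rfl | hne
    · have : J = ∅ := by simp [hJ]
      rw [this]
      simpa using hlam0.trans_le' (by simp)
    · haveI : Nonempty ↥T := hne.to_subtype
      have hb := mk_biUnion_le
        (fun x : APow μ κ => {ξ | x ξ ≠ (∞ : OnePoint μ.out)}) T
      have hsup : ⨆ x : ↥T, #↥{ξ | (x : APow μ κ) ξ ≠ (∞ : OnePoint μ.out)} ≤ ℵ₀ :=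
        ciSup_le' fun x => ((hTS x.2).lt_aleph0).le
      calc #↥J ≤ _ := hb
        _ ≤ #↥T * ℵ₀ := mul_le_mul_right hsup _
        _ < lam := mul_lt_of_lt hlam0.le hT hlam0
  have hZ : ∀ z ∈ closure T, ∀ ξ, ξ ∉ J → z ξ = (∞ : OnePoint μ.out) := by
    intro z hz ξ hξ
    have hclosed : IsClosed ((fun x : APow μ κ => x ξ) ⁻¹' {(∞ : OnePoint μ.out)}) :=
      IsClosed.preimage (continuous_apply ξ) isClosed_singleton
    have hTsub : T ⊆ (fun x : APow μ κ => x ξ) ⁻¹' {(∞ : OnePoint μ.out)} := by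
      intro x hx
      by_contra hne
      simp only [mem_preimage, mem_singleton_iff] at hne
      exact hξ (mem_biUnion hx hne)
    have := closure_minimal hTsub hclosed hz
    exact this
  have hb := tweight_subset_pi_onePoint (ι := κ.out) (D := μ.out) J (closure T) hZ
  haveI : Infinite μ.out := Cardinal.infinite_iff.mpr (by rwa [mk_out])
  have hE : #(μ.out ⊕ Finset μ.out) = μ := by
    rw [mk_sum]
    simp only [lift_id, mk_out, mk_finset_of_infinite, mk_out]
    exact add_eq_self hμ
  have hprod : #(↥J × (μ.out ⊕ Finset μ.out)) = #↥J * μ := by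
    rw [mk_prod]; simp only [lift_id]; rw [hE]
  calc tweight ↥(closure T) ≤ #(Finset (↥J × (μ.out ⊕ Finset μ.out))) := hb
    _ ≤ max ℵ₀ #(↥J × (μ.out ⊕ Finset μ.out)) := mk_finset_le' _
    _ = max ℵ₀ (#↥J * μ) := by rw [hprod]
    _ < lam := max_lt hlam0 (mul_lt_of_lt hlam0.le hJlt h1)

lemma aux_part_ii (μ lam κ : Cardinal.{u}) (hμ : ℵ₀ ≤ μ) (h1 : μ < lam) (h2 : lam ≤ κ)
    (Y : Type u) (tY : TopologicalSpace Y) (hT2 : T2Space Y)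
    (f : APow μ κ → Y) (hf : Continuous f) (hsurj : Surjective f)
    (hw : tweight Y = lam) : #(f '' finSupport μ κ) = lam := by
  classical
  haveI := hT2
  haveI : CompactSpace Y :=
    ⟨by rw [← Set.range_eq_univ.mpr hsurj]; exact isCompact_range hf⟩
  have hlam0 : ℵ₀ < lam := lt_of_le_of_lt hμ h1
  -- upper bound
  obtain ⟨G, hGcard, hGsep⟩ := exists_separating_family Y
  have hGle : #↥G ≤ lam := hGcard.trans (by rw [hw]; exact max_le hlam0.le le_rfl)
  choose Jg hJgc hJgd using fun g : ↥G =>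
    depends_countable (ι := κ.out) (D := μ.out) ((g : C(Y, ℝ)).comp ⟨f, hf⟩)
  set J : Set κ.out := ⋃ g : ↥G, Jg g with hJdef
  have hJcard : #↥J ≤ lam := by
    rcases isEmpty_or_nonempty ↥G with hemp | hne
    · have : J = ∅ := by simp [hJdef]
      rw [this]; simpa using hlam0.le.trans' (by simp)
    · calc #↥J ≤ #↥G * ⨆ g : ↥G, #↥(Jg g) := mk_iUnion_le _
        _ ≤ #↥G * ℵ₀ := mul_le_mul_right (ciSup_le' fun g => (hJgc g).le_aleph0) _
        _ ≤ lam * lam := mul_le_mul' hGle hlam0.le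
        _ = lam := mul_eq_self hlam0.le
  have hdet : ∀ x y : APow μ κ, (∀ ξ ∈ J, x ξ = y ξ) → f x = f y := by
    intro x y hxy
    by_contra hne
    obtain ⟨g, hgG, hgne⟩ := hGsep _ _ hne
    exact hgne (hJgd ⟨g, hgG⟩ x y fun ξ hξ => hxy ξ (mem_iUnion.mpr ⟨⟨g, hgG⟩, hξ⟩))
  set proj : APow μ κ → APow μ κ :=
    fun x ξ => if ξ ∈ J then x ξ else (∞ : OnePoint μ.out) with hproj_def
  have hproj : ∀ x, f (proj x) = f x := fun x =>
    hdet _ _ fun ξ hξ => by simp [hproj_def, hξ]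
  set SJ : Set (APow μ κ) :=
    {x | x ∈ finSupport μ κ ∧ ∀ ξ, ξ ∉ J → x ξ = (∞ : OnePoint μ.out)} with hSJ
  have hsurjSJ : Surjective
      (fun x : ↥SJ => (⟨f x.1, ⟨x.1, x.2.1, rfl⟩⟩ : ↥(f '' finSupport μ κ))) := by
    rintro ⟨y, x, hx, rfl⟩
    refine ⟨⟨proj x, ⟨?_, ?_⟩⟩, ?_⟩
    · refine hx.subset ?_
      intro ξ hξ
      simp only [hproj_def, mem_setOf_eq] at hξ ⊢
      intro hc
      apply hξ
      by_cases hξJ : ξ ∈ J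
      · exact (if_pos hξJ).trans hc
      · exact if_neg hξJ
    · intro ξ hξ; simp [hproj_def, hξ]; rfl
    · exact Subtype.ext (hproj x)
  have hub0 : #↥(f '' finSupport μ κ) ≤ #↥SJ := mk_le_of_surjective hsurjSJ
  -- inject SJ into finite graphs
  have hgraph : ∀ x : ↥SJ,
      {p : ↥J × μ.out | x.1 ↑p.1 = (p.2 : OnePoint μ.out)}.Finite := by
    intro x
    apply Set.Finite.of_finite_image (f := fun p : ↥J × μ.out => (↑p.1 : κ.out))
    · refine Set.Finite.subset x.2.1 ?_
      rintro ξ ⟨p, hp, rfl⟩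
      simp only [mem_setOf_eq] at hp ⊢
      rw [hp]
      exact coe_ne_infty _
    · rintro p hp q hq hpq
      simp only [mem_setOf_eq] at hp hq
      have h1 : p.1 = q.1 := Subtype.ext hpq
      have h2 : (p.2 : OnePoint μ.out) = (q.2 : OnePoint μ.out) := by
        rw [← hp, ← hq, h1]
      exact Prod.ext h1 (coe_eq_coe.mp h2)
  have hinjΦ : Injective (fun x : ↥SJ => (hgraph x).toFinset) := by
    intro x y hxy
    have heq : (hgraph x).toFinset = (hgraph y).toFinset := hxy
    have hmem : ∀ p : ↥J × μ.out,
        (x.1 ↑p.1 = (p.2 : OnePoint μ.out)) ↔ (y.1 ↑p.1 = (p.2 : OnePoint μ.out)) := by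
      intro p
      constructor <;> intro hp
      · have : p ∈ (hgraph x).toFinset := (Set.Finite.mem_toFinset _).mpr hp
        rw [heq] at this
        exact (Set.Finite.mem_toFinset (hgraph y)).mp this
      · have : p ∈ (hgraph y).toFinset := (Set.Finite.mem_toFinset _).mpr hp
        rw [← heq] at this
        exact (Set.Finite.mem_toFinset (hgraph x)).mp this
    apply Subtype.ext
    funext ξ
    by_cases hξ : ξ ∈ J
    · rcases onePoint_cases (x.1 ξ) with hx0 | ⟨a, hxa⟩
      · rcases onePoint_cases (y.1 ξ) with hy0 | ⟨b, hyb⟩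
        · rw [hx0, hy0]
        · exact absurd ((hmem (⟨ξ, hξ⟩, b)).mpr hyb) (by rw [hx0]; exact infty_ne_coe b)
      · rw [hxa, (hmem (⟨ξ, hξ⟩, a)).mp hxa]
    · rw [x.2.2 ξ hξ, y.2.2 ξ hξ]
  haveI : Infinite μ.out := Cardinal.infinite_iff.mpr (by rwa [mk_out])
  have hub : #↥(f '' finSupport μ κ) ≤ lam := by
    calc #↥(f '' finSupport μ κ) ≤ #↥SJ := hub0
      _ ≤ #(Finset (↥J × μ.out)) := mk_le_of_injective hinjΦ
      _ ≤ max ℵ₀ #(↥J × μ.out) := mk_finset_le' _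
      _ = max ℵ₀ (#↥J * μ) := by rw [mk_prod]; simp only [lift_id]; rw [mk_out]
      _ ≤ lam := max_le hlam0.le
        ((mul_le_mul' hJcard h1.le).trans (mul_eq_self hlam0.le).le)
  -- lower bound
  have hlb : lam ≤ #↥(f '' finSupport μ κ) := by
    by_contra hcon
    push_neg at hcon
    have hDdense : Dense (f '' finSupport μ κ) := by
      rw [dense_iff_closure_eq]
      apply Set.eq_univ_of_univ_subset
      calc Set.univ = range f := (Set.range_eq_univ.mpr hsurj).symm
        _ = f '' closure (finSupport μ κ) := by
            rw [(aux_dense μ κ).closure_eq, image_univ]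
        _ ⊆ closure (f '' finSupport μ κ) := image_closure_subset_closure_image hf
    choose sec hsecS hsecf using fun y : ↥(f '' finSupport μ κ) =>
      (y.2 : ∃ x, x ∈ finSupport μ κ ∧ f x = ↑y)
    set T : Set (APow μ κ) := range sec with hTdef
    have hTS : T ⊆ finSupport μ κ := by
      rintro _ ⟨y, rfl⟩; exact hsecS y
    have hTcard : #↥T < lam := lt_of_le_of_lt mk_range_le hcon
    have hwlt := aux_part_i μ lam κ hμ h1 T hTS hTcard
    haveI : CompactSpace ↥(closure T) :=
      isCompact_iff_compactSpace.mp isClosed_closure.isCompact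
    set gK : ↥(closure T) → Y := fun k => f ↑k with hgKdef
    have hgKc : Continuous gK := hf.comp continuous_subtype_val
    have hgKsurj : Surjective gK := by
      have himg : f '' closure T = Set.univ := by
        have hclosed : IsClosed (f '' closure T) :=
          ((isClosed_closure.isCompact).image hf).isClosed
        apply Set.eq_univ_of_univ_subset
        calc Set.univ = closure (f '' finSupport μ κ) := hDdense.closure_eq.symm
          _ ⊆ closure (f '' closure T) := by
              apply closure_mono
              rintro _ ⟨x, hx, rfl⟩
              exact ⟨sec ⟨f x, ⟨x, hx, rfl⟩⟩, subset_closure (mem_range_self _),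
                hsecf ⟨f x, ⟨x, hx, rfl⟩⟩⟩
          _ = f '' closure T := hclosed.closure_eq
      intro y
      have : y ∈ f '' closure T := himg ▸ mem_univ y
      obtain ⟨k, hk, hky⟩ := this
      exact ⟨⟨k, hk⟩, hky⟩
    have hle := tweight_image_le (f := gK) hgKc hgKsurj
    rw [hw] at hle
    exact absurd hle (not_le.mpr (max_lt hlam0 hwlt))
  exact le_antisymm hub hlb

end MainParts

/-- Theorem 3.4 (tm:mk). -/
theorem statement10 (μ lam κ : Cardinal.{u}) (hμ : ℵ₀ ≤ μ) (h1 : μ < lam) (h2 : lam ≤ κ) :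
    lam ≤ tweight (APow μ κ) ∧ DeltaWitness lam (APow μ κ) (finSupport μ κ) := by
  refine ⟨aux_lb μ lam κ hμ h1 h2, aux_dense μ κ,
    fun T hTS hT => aux_part_i μ lam κ hμ h1 T hTS hT, ?_⟩
  intro Y tY hT2 f hf hsurj hw
  exact aux_part_ii μ lam κ hμ h1 h2 Y tY hT2 f hf hsurj hw
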